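/- arXiv:math/9411228 — 2 statements merged into one kernel-verified Lean document; each statement's English description precedes it below -/
import Mathlib

section
/- Let s, ν, a be real numbers with 0 < s < 2ν and |a| < 1. Then the Mellin transform ∫₀^∞ x^{s−1} / [(x+1)² + a²]^ν dx equals B(s, 2ν−s) · ₂F₁(ν − s/2, ν + (1−s)/2; ν + 1/2; −a²). -/
open MeasureTheory Set Filter

/-- Pochhammer symbol `(c)_n = c(c+1)⋯(c+n−1)` for a real `c`. -/
noncomputable def poch (c : ℝ) (n : ℕ) : ℝ := ∏ i ∈ Finset.range n, (c + i)

/-- The Gauss hypergeometric series `₂F₁(a,b;c;z)`. -/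
noncomputable def hyp2F1 (a b c z : ℝ) : ℝ :=
  ∑' n : ℕ, poch a n * poch b n / poch c n * z ^ n / n.factorial

/-- The Beta function `B(x,y) = Γ(x)Γ(y)/Γ(x+y)`. -/
noncomputable def betaFn (x y : ℝ) : ℝ := Real.Gamma x * Real.Gamma y / Real.Gamma (x + y)


lemma poch_zero (c : ℝ) : poch c 0 = 1 := by simp [poch]

lemma poch_succ (c : ℝ) (n : ℕ) : poch c (n + 1) = poch c n * (c + n) :=
  Finset.prod_range_succ _ _

lemma poch_pos {c : ℝ} (hc : 0 < c) (n : ℕ) : 0 < poch c n :=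
  Finset.prod_pos fun i _ => by positivity

lemma poch_le_poch {c d : ℝ} (hc : 0 < c) (hcd : c ≤ d) (n : ℕ) : poch c n ≤ poch d n := by
  apply Finset.prod_le_prod (fun i _ => by positivity) (fun i _ => by linarith)

lemma poch_two_mul (c : ℝ) (n : ℕ) :
    poch c (2 * n) = 4 ^ n * poch (c / 2) n * poch ((c + 1) / 2) n := by
  induction n with
  | zero => simp [poch]
  | succ n ih =>
      have h1 : 2 * (n + 1) = (2 * n + 1) + 1 := by ring
      rw [h1, poch_succ, poch_succ, poch_succ, poch_succ, ih]
      push_cast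
      ring

lemma betaFn_pos {x y : ℝ} (hx : 0 < x) (hy : 0 < y) : 0 < betaFn x y := by
  unfold betaFn
  have := Real.Gamma_pos_of_pos hx
  have := Real.Gamma_pos_of_pos hy
  have := Real.Gamma_pos_of_pos (by linarith : (0:ℝ) < x + y)
  positivity

lemma betaFn_succ {x y : ℝ} (hx : 0 < x) (hy : 0 < y) :
    betaFn x (y + 1) = betaFn x y * (y / (x + y)) := by
  unfold betaFn
  have h1 : Real.Gamma (y + 1) = y * Real.Gamma y := Real.Gamma_add_one hy.ne'
  have h2 : x + (y + 1) = (x + y) + 1 := by ring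
  have h3 : Real.Gamma ((x + y) + 1) = (x + y) * Real.Gamma (x + y) :=
    Real.Gamma_add_one (by linarith)
  have h4 : Real.Gamma (x + y) ≠ 0 := (Real.Gamma_pos_of_pos (by linarith)).ne'
  rw [h2, h1, h3]
  field_simp

lemma betaFn_add_nat {x y : ℝ} (hx : 0 < x) (hy : 0 < y) (n : ℕ) :
    betaFn x (y + n) = betaFn x y * (poch y n / poch (x + y) n) := by
  induction n with
  | zero => simp [poch_zero, betaFn]
  | succ n ih =>
      have hyn : (0:ℝ) < y + n := by positivity
      have h1 : y + (n + 1 : ℕ) = (y + n) + 1 := by push_cast; ring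
      rw [h1, betaFn_succ hx hyn, ih, poch_succ, poch_succ]
      have h2 : (0:ℝ) < poch (x + y) n := poch_pos (by linarith) n
      have h3 : x + y + n ≠ 0 := by positivity
      field_simp
      ring

-- master summability
lemma summable_master {ν r : ℝ} (hν : 0 < ν) (hr0 : 0 < r) (hr1 : r < 1) :
    Summable (fun n : ℕ => ((n:ℝ) + 1) * (poch ν n / n.factorial) * r ^ n) := by
  set w : ℕ → ℝ := fun n => ((n:ℝ) + 1) * (poch ν n / n.factorial) * r ^ n with hw
  have hwpos : ∀ n, 0 < w n := by
    intro n
    have := poch_pos hν n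
    have : (0:ℝ) < n.factorial := by positivity
    have := poch_pos hν n
    positivity
  apply summable_of_ratio_test_tendsto_lt_one hr1
    (Eventually.of_forall fun n => (hwpos n).ne')
  have heq : ∀ n : ℕ, ‖w (n+1)‖ / ‖w n‖
      = r * ((1 + 1/((n:ℝ)+1)) * (1 + (ν-1) * (1/((n:ℝ)+1)))) := by
    intro n
    rw [Real.norm_eq_abs, Real.norm_eq_abs, abs_of_pos (hwpos _), abs_of_pos (hwpos _)]
    have h1 : (0:ℝ) < poch ν n := poch_pos hν n
    have h2 : (0:ℝ) < (n.factorial : ℝ) := by positivity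
    have h3 : ((n:ℝ)+1) ≠ 0 := by positivity
    simp only [hw, poch_succ, Nat.factorial_succ]
    push_cast
    field_simp
    ring
  rw [show (nhds r) = nhds (r * ((1 + 0) * (1 + (ν - 1) * 0))) by norm_num]
  refine Tendsto.congr (fun n => (heq n).symm) ?_
  exact (tendsto_const_nhds.mul ((tendsto_const_nhds.add
    tendsto_one_div_add_atTop_nhds_zero_nat).mul (tendsto_const_nhds.add
    (tendsto_const_nhds.mul tendsto_one_div_add_atTop_nhds_zero_nat))))

lemma hasSum_binomial {ν t : ℝ} (hν : 0 < ν) (ht : |t| < 1) :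
    HasSum (fun n : ℕ => (-1)^n * poch ν n / n.factorial * t^n) ((1+t) ^ (-ν)) := by
  set a : ℕ → ℝ := fun n => (-1)^n * poch ν n / n.factorial with ha
  have habs : ∀ n, |a n| = poch ν n / n.factorial := by
    intro n
    have h1 : (0:ℝ) < poch ν n := poch_pos hν n
    have h2 : (0:ℝ) < (n.factorial : ℝ) := by positivity
    rw [ha]
    simp only [abs_div, abs_mul, abs_pow, abs_neg, abs_one, one_pow, one_mul,
      abs_of_pos h1, abs_of_pos h2]
  set r : ℝ := (1 + |t|)/2 with hr
  have hr0 : 0 < r := by positivity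
  have hr1 : r < 1 := by rw [hr]; linarith
  have htr : |t| < r := by rw [hr]; linarith
  have hw := summable_master hν hr0 hr1
  set w : ℕ → ℝ := fun n : ℕ => ((n:ℝ) + 1) * (poch ν n / n.factorial) * r ^ n with hwdef
  set u : ℕ → ℝ := fun n : ℕ => (n:ℝ) * (poch ν n / n.factorial) * r ^ n / r with hu
  have hu_nonneg : ∀ n, 0 ≤ u n := by
    intro n
    have := (poch_pos hν n).le
    have : (0:ℝ) ≤ (n.factorial : ℝ) := by positivity
    have := (poch_pos hν n).le
    positivity
  have huw : ∀ n, u n ≤ (1/r) * w n := by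
    intro n
    rw [hu, hwdef]
    have h1 : (0 : ℝ) ≤ (poch ν n / n.factorial) * r ^ n := by
      have := (poch_pos hν n).le
      positivity
    have h2 : (n:ℝ) ≤ (n:ℝ) + 1 := by linarith
    calc (n:ℝ) * (poch ν n / ↑n.factorial) * r ^ n / r
        = (1/r) * ((n:ℝ) * ((poch ν n / ↑n.factorial) * r ^ n)) := by ring
      _ ≤ (1/r) * (((n:ℝ)+1) * ((poch ν n / ↑n.factorial) * r ^ n)) := by
          apply mul_le_mul_of_nonneg_left (by nlinarith) (by positivity)
      _ = 1 / r * (((n:ℝ) + 1) * (poch ν n / ↑n.factorial) * r ^ n) := by ring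
  have hsu : Summable u := Summable.of_nonneg_of_le hu_nonneg huw (hw.mul_left _)
  -- T := Ioo (-r) r
  set T : Set ℝ := Ioo (-r) r with hT
  set g : ℕ → ℝ → ℝ := fun n y => a n * y ^ n with hg
  set g' : ℕ → ℝ → ℝ := fun n y => a n * ((n:ℝ) * y ^ (n-1)) with hg'
  have hderiv : ∀ n : ℕ, ∀ y ∈ T, HasDerivAt (g n) (g' n y) y := by
    intro n y _
    exact (hasDerivAt_pow n y).const_mul (a n)
  have hbound : ∀ n : ℕ, ∀ y ∈ T, ‖g' n y‖ ≤ u n := by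
    intro n y hy
    have hya : |y| ≤ r := by
      rcases hy with ⟨h1, h2⟩; rw [abs_le]; constructor <;> linarith
    rcases Nat.eq_zero_or_pos n with h | h
    · subst h; simp [hg', hu]
    · have hn1 : n - 1 + 1 = n := Nat.succ_pred_eq_of_pos h
      rw [hg', Real.norm_eq_abs, abs_mul, abs_mul, habs, abs_pow]
      rw [hu]
      have h1 : |y| ^ (n-1) ≤ r ^ (n-1) := pow_le_pow_left₀ (abs_nonneg y) hya _
      have h2 : r ^ (n-1) = r ^ n / r := by
        rw [← hn1, pow_succ]; field_simp; simp
      have h3 : (0:ℝ) ≤ poch ν n / n.factorial := by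
        have := (poch_pos hν n).le
        positivity
      have : |(n:ℝ)| = (n:ℝ) := abs_of_nonneg (Nat.cast_nonneg n)
      calc poch ν n / ↑n.factorial * (|(n:ℝ)| * |y| ^ (n - 1))
          ≤ poch ν n / ↑n.factorial * ((n:ℝ) * (r^n / r)) := by
            rw [this, ← h2]
            exact mul_le_mul_of_nonneg_left
              (mul_le_mul_of_nonneg_left h1 (Nat.cast_nonneg n)) h3
        _ = (n:ℝ) * (poch ν n / ↑n.factorial) * r ^ n / r := by ring
  have h0T : (0:ℝ) ∈ T := by constructor <;> simp [hr0] <;> linarith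
  have hg0 : Summable (fun n => g n 0) := by
    apply summable_of_ne_finset_zero (s := {0})
    intro n hn
    have : n ≠ 0 := by simpa using hn
    simp [hg, zero_pow this]
  have hopen : IsOpen T := isOpen_Ioo
  have hconn : IsPreconnected T := (convex_Ioo _ _).isPreconnected
  have hD : ∀ y ∈ T, HasDerivAt (fun z => ∑' n, g n z) (∑' n, g' n y) y :=
    fun y hy => hasDerivAt_tsum_of_isPreconnected hsu hopen hconn hderiv hbound h0T hg0 hy
  -- summability of g at each point of T
  have hSG : ∀ y ∈ T, Summable (fun n => g n y) := by
    intro y hy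
    have hya : |y| ≤ r := by
      rcases hy with ⟨h1, h2⟩; rw [abs_le]; constructor <;> linarith
    apply Summable.of_norm_bounded hw
    intro n
    rw [hg, Real.norm_eq_abs, abs_mul, habs, abs_pow, hwdef]
    have h1 : |y| ^ n ≤ r ^ n := pow_le_pow_left₀ (abs_nonneg y) hya _
    have h3 : (0:ℝ) ≤ poch ν n / n.factorial := by
      have := (poch_pos hν n).le; positivity
    nlinarith [mul_le_mul_of_nonneg_left h1 h3,
      mul_nonneg (Nat.cast_nonneg n : (0:ℝ) ≤ n) (mul_nonneg h3 (pow_nonneg hr0.le n))]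
  -- recurrence for coefficients
  have hrec : ∀ n : ℕ, ((n:ℝ)+1) * a (n+1) = -((ν + n) * a n) := by
    intro n
    have h2 : ((n.factorial : ℝ)) ≠ 0 := by positivity
    have h3 : ((n:ℝ)+1) ≠ 0 := by positivity
    simp only [ha, poch_succ, Nat.factorial_succ, pow_succ]
    push_cast
    field_simp
  -- the ODE identity
  have hODE : ∀ y ∈ T, (1+y) * (∑' n, g' n y) + ν * (∑' n, g n y) = 0 := by
    intro y hy
    have S1 : Summable (fun n => g' n y) :=
      Summable.of_norm_bounded hsu (fun n => hbound n y hy)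
    have S2 : Summable (fun n => g n y) := hSG y hy
    have S1' : Summable (fun n => g' (n+1) y) := (summable_nat_add_iff (f := fun n => g' n y) 1).2 S1
    have hshift : (∑' n, g' n y) = ∑' n, g' (n+1) y := by
      rw [S1.tsum_eq_zero_add]
      simp [hg']
    have hterm : ∀ n : ℕ, g' (n+1) y + (y * g' n y + ν * g n y) = 0 := by
      intro n
      have key := hrec n
      have h1 : g' (n+1) y = (((n:ℝ)+1) * a (n+1)) * y ^ n := by
        simp only [hg', Nat.add_sub_cancel]
        push_cast
        ring
      have h2 : y * g' n y = ((n:ℝ) * a n) * y ^ n := by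
        rcases n with _ | m
        · simp [hg']
        · simp only [hg', Nat.add_sub_cancel]
          push_cast
          ring
      rw [h1, h2, key]
      simp only [hg]
      ring
    have hcomb : Summable (fun n => y * g' n y + ν * g n y) :=
      (S1.mul_left y).add (S2.mul_left ν)
    calc (1+y) * (∑' n, g' n y) + ν * (∑' n, g n y)
        = (∑' n, g' n y) + (y * (∑' n, g' n y) + ν * (∑' n, g n y)) := by ring
      _ = (∑' n, g' n y) + ((∑' n, y * g' n y) + (∑' n, ν * g n y)) := by
          rw [tsum_mul_left, tsum_mul_left]
      _ = (∑' n, g' (n+1) y) + ((∑' n, y * g' n y) + (∑' n, ν * g n y)) := by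
          rw [hshift]
      _ = (∑' n, g' (n+1) y) + (∑' n, (y * g' n y + ν * g n y)) := by
          rw [Summable.tsum_add (S1.mul_left y) (S2.mul_left ν)]
      _ = ∑' n, (g' (n+1) y + (y * g' n y + ν * g n y)) := (Summable.tsum_add S1' hcomb).symm
      _ = 0 := by simp [hterm]
  -- the auxiliary function H is constant
  set H : ℝ → ℝ := fun z => (∑' n, g n z) * (1+z) ^ ν with hHdef
  have hH : ∀ y ∈ T, HasDerivAt H 0 y := by
    intro y hy
    have h1y : (0:ℝ) < 1 + y := by
      rcases hy with ⟨h1, _⟩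
      linarith
    have hrp : HasDerivAt (fun z : ℝ => (1+z) ^ ν) (ν * (1+y) ^ (ν-1)) y := by
      have hbase := Real.hasDerivAt_rpow_const (x := 1+y) (p := ν) (Or.inl h1y.ne')
      have hc : HasDerivAt (fun z : ℝ => 1+z) 1 y := by
        simpa using (hasDerivAt_id y).const_add 1
      have := hbase.comp y hc
      simp only [mul_one] at this
      exact this
    have hmul := (hD y hy).mul hrp
    have hfact : (1+y) ^ ν = (1+y) ^ (ν-1) * (1+y) := by
      rw [← Real.rpow_add_one h1y.ne' (ν-1)]
      ring_nf
    have hode := hODE y hy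
    refine hmul.congr_deriv ?_
    rw [hfact]
    linear_combination (1+y) ^ (ν-1) * hode
  have hsubT : Icc (-|t|) (|t|) ⊆ T := by
    intro y hy
    exact ⟨lt_of_lt_of_le (neg_lt_neg htr) hy.1, lt_of_le_of_lt hy.2 htr⟩
  have hcont : ContinuousOn H (Icc (-|t|) (|t|)) :=
    fun y hy => ((hH y (hsubT hy)).continuousAt).continuousWithinAt
  have hconst := constant_of_has_deriv_right_zero hcont
    (fun y hy => (hH y (hsubT (Ico_subset_Icc_self hy))).hasDerivWithinAt)
  have htmem : t ∈ Icc (-|t|) (|t|) := ⟨neg_abs_le t, le_abs_self t⟩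
  have h0mem : (0:ℝ) ∈ Icc (-|t|) (|t|) := ⟨neg_nonpos.2 (abs_nonneg t), abs_nonneg t⟩
  have hH0 : H 0 = 1 := by
    have hG0 : (∑' n, g n 0) = 1 := by
      rw [tsum_eq_single 0 (fun n hn => by simp [hg, zero_pow hn])]
      simp [hg, ha, poch_zero]
    simp [hHdef, hG0]
  have hHt : H t = 1 := by
    rw [hconst t htmem, ← hconst 0 h0mem, hH0]
  have h1t : (0:ℝ) < 1 + t := by
    have := (abs_lt.mp ht).1
    linarith
  have hne : (1+t) ^ ν ≠ 0 := (Real.rpow_pos_of_pos h1t ν).ne'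
  have hGt : (∑' n, g n t) = (1+t) ^ (-ν) := by
    have : (∑' n, g n t) * (1+t) ^ ν = 1 := hHt
    rw [Real.rpow_neg h1t.le]
    field_simp at this ⊢
    linarith [this]
  have hst : Summable (fun n => g n t) := hSG t (abs_lt.mp htr)
  have := hst.hasSum
  rw [hGt] at this
  exact this

lemma complex_beta_eq {u v : ℝ} (hu : 0 < u) (hv : 0 < v) :
    Complex.betaIntegral u v = (betaFn u v : ℂ) := by
  have h1 : Complex.Gamma u * Complex.Gamma v
      = Complex.Gamma (u + v) * Complex.betaIntegral u v :=
    Complex.Gamma_mul_Gamma_eq_betaIntegral (by simpa using hu) (by simpa using hv)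
  have h2 : Complex.Gamma ((u:ℂ) + v) ≠ 0 := by
    rw [show ((u:ℂ) + v) = ((u + v : ℝ) : ℂ) by push_cast; ring, Complex.Gamma_ofReal]
    exact_mod_cast (Real.Gamma_pos_of_pos (by linarith)).ne'
  rw [show ((u:ℂ) + v) = ((u + v : ℝ) : ℂ) by push_cast; ring] at h1 h2
  rw [Complex.Gamma_ofReal, Complex.Gamma_ofReal, Complex.Gamma_ofReal] at h1
  unfold betaFn
  have h3 : (Real.Gamma (u+v) : ℂ) ≠ 0 := by rwa [Complex.Gamma_ofReal] at h2
  push_cast at h1 ⊢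
  field_simp
  linear_combination -h1

lemma beta_integrand_eq {u v : ℝ} (x : ℝ) (hx : x ∈ Ioo (0:ℝ) 1) :
    ((x : ℂ) ^ ((u:ℂ) - 1) * (1 - (x:ℂ)) ^ ((v:ℂ) - 1))
      = ((x ^ (u-1) * (1-x) ^ (v-1) : ℝ) : ℂ) := by
  rcases hx with ⟨h0, h1⟩
  rw [Complex.ofReal_mul, Complex.ofReal_cpow h0.le, Complex.ofReal_cpow (by linarith : (0:ℝ) ≤ 1 - x)]
  push_cast
  ring

lemma integrableOn_beta {u v : ℝ} (hu : 0 < u) (hv : 0 < v) :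
    IntegrableOn (fun x : ℝ => x ^ (u-1) * (1-x) ^ (v-1)) (Ioo 0 1) := by
  have hc : IntegrableOn (fun x : ℝ => (x : ℂ) ^ ((u:ℂ) - 1) * (1 - (x:ℂ)) ^ ((v:ℂ) - 1))
      (Ioo 0 1) := by
    have := (Complex.betaIntegral_convergent (u := u) (v := v) (by simpa using hu)
      (by simpa using hv))
    rw [intervalIntegrable_iff_integrableOn_Ioc_of_le zero_le_one] at this
    exact this.mono_set Ioo_subset_Ioc_self
  have h5 : IntegrableOn (fun x : ℝ => RCLike.re ((x : ℂ) ^ ((u:ℂ) - 1) * (1 - (x:ℂ)) ^ ((v:ℂ) - 1)))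
      (Ioo 0 1) := hc.re
  apply h5.congr_fun ?_ measurableSet_Ioo
  intro x hx
  show RCLike.re ((x : ℂ) ^ ((u:ℂ) - 1) * (1 - (x:ℂ)) ^ ((v:ℂ) - 1)) = x ^ (u-1) * (1-x) ^ (v-1)
  rw [beta_integrand_eq x hx]
  simp

lemma integral_beta {u v : ℝ} (hu : 0 < u) (hv : 0 < v) :
    ∫ x in Ioo (0:ℝ) 1, x ^ (u-1) * (1-x) ^ (v-1) = betaFn u v := by
  have h1 : Complex.betaIntegral u v
      = ∫ x in Ioo (0:ℝ) 1, ((x ^ (u-1) * (1-x) ^ (v-1) : ℝ) : ℂ) := by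
    rw [Complex.betaIntegral, intervalIntegral.integral_of_le zero_le_one,
      integral_Ioc_eq_integral_Ioo]
    apply setIntegral_congr_fun measurableSet_Ioo
    intro x hx
    exact beta_integrand_eq x hx
  have h2 := complex_beta_eq hu hv
  rw [h1] at h2
  have h4 : ∫ x in Ioo (0:ℝ) 1, ((x ^ (u-1) * (1-x) ^ (v-1) : ℝ) : ℂ)
      = ((∫ x in Ioo (0:ℝ) 1, x ^ (u-1) * (1-x) ^ (v-1) : ℝ) : ℂ) :=
    integral_ofReal (𝕜 := ℂ)
  rw [h4] at h2
  exact_mod_cast h2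

lemma phi_image : (fun u : ℝ => u / (1 - u)) '' Ioo 0 1 = Ioi 0 := by
  ext x
  constructor
  · rintro ⟨u, ⟨hu0, hu1⟩, rfl⟩
    exact div_pos hu0 (by linarith)
  · intro hx
    rw [mem_Ioi] at hx
    refine ⟨x / (1 + x), ⟨by positivity, ?_⟩, ?_⟩
    · rw [div_lt_one (by linarith)]; linarith
    · show (x / (1 + x)) / (1 - x / (1 + x)) = x
      have h1 : 1 - x / (1 + x) = 1 / (1 + x) := by field_simp; ring
      rw [h1]
      field_simp

lemma mellin_beta_aux {s p : ℝ} (hs : 0 < s) (hsp : s < p) :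
    ∀ u ∈ Ioo (0:ℝ) 1, |1 / (1-u)^2| • ((u/(1-u)) ^ (s-1) * (1 + u/(1-u)) ^ (-p))
      = u ^ (s-1) * (1-u) ^ ((p-s)-1) := by
  intro u hu
  rcases hu with ⟨hu0, hu1⟩
  have hA : (0:ℝ) < 1 - u := by linarith
  have eA : 1 + u / (1-u) = (1-u)⁻¹ := by field_simp; ring
  have e1 : ((1-u)⁻¹) ^ (-p) = (1-u) ^ p := by
    rw [Real.inv_rpow hA.le, Real.rpow_neg hA.le, inv_inv]
  have e2 : (u/(1-u)) ^ (s-1) = u ^ (s-1) * ((1-u) ^ (s-1))⁻¹ := by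
    rw [Real.div_rpow hu0.le hA.le, div_eq_mul_inv]
  have e3 : |1 / (1-u)^2| = ((1-u) ^ ((2:ℕ):ℝ))⁻¹ := by
    rw [abs_of_pos (by positivity), Real.rpow_natCast, one_div]
  rw [smul_eq_mul, eA, e1, e2, e3]
  have e4 : ((1-u) ^ ((2:ℕ):ℝ))⁻¹ * (u ^ (s-1) * ((1-u) ^ (s-1))⁻¹ * (1-u) ^ p)
      = u ^ (s-1) * ((1-u) ^ p / ((1-u) ^ (s-1) * (1-u) ^ ((2:ℕ):ℝ))) := by
    ring
  rw [e4, ← Real.rpow_add hA, ← Real.rpow_sub hA]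
  congr 1
  push_cast
  ring

lemma mellin_beta {s p : ℝ} (hs : 0 < s) (hsp : s < p) :
    IntegrableOn (fun x : ℝ => x ^ (s-1) * (1+x) ^ (-p)) (Ioi 0) ∧
    ∫ x in Ioi (0:ℝ), x ^ (s-1) * (1+x) ^ (-p) = betaFn s (p - s) := by
  set φ : ℝ → ℝ := fun u => u / (1 - u) with hφ
  set φ' : ℝ → ℝ := fun u => 1 / (1-u)^2 with hφ'
  have hderiv : ∀ u ∈ Ioo (0:ℝ) 1, HasDerivWithinAt φ (φ' u) (Ioo 0 1) u := by
    intro u hu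
    rcases hu with ⟨hu0, hu1⟩
    have h1 : (1:ℝ) - u ≠ 0 := by linarith
    have h2 := (hasDerivAt_id u).div ((hasDerivAt_const u (1:ℝ)).sub (hasDerivAt_id u)) h1
    have h3 : HasDerivAt φ (1 / (1-u)^2) u := by
      refine h2.congr_deriv ?_
      simp only [Pi.sub_apply, id]
      ring
    exact h3.hasDerivWithinAt
  have hinj : InjOn φ (Ioo 0 1) := by
    intro x hx y hy h
    rcases hx with ⟨hx0, hx1⟩
    rcases hy with ⟨hy0, hy1⟩
    rw [hφ] at h
    simp only at h
    rw [div_eq_div_iff (by linarith) (by linarith)] at h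
    nlinarith
  set g : ℝ → ℝ := fun x => x ^ (s-1) * (1+x) ^ (-p) with hg
  have key := MeasureTheory.integral_image_eq_integral_abs_deriv_smul
    measurableSet_Ioo hderiv hinj g
  have keyI := MeasureTheory.integrableOn_image_iff_integrableOn_abs_deriv_smul
    measurableSet_Ioo hderiv hinj g
  rw [phi_image] at key keyI
  have hps : 0 < p - s := by linarith
  have hEq : EqOn (fun u : ℝ => u ^ (s-1) * (1-u) ^ ((p-s)-1))
      (fun u => |φ' u| • g (φ u)) (Ioo 0 1) := by
    intro u hu
    exact (mellin_beta_aux hs hsp u hu).symm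
  constructor
  · rw [keyI]
    exact (integrableOn_beta hs hps).congr_fun hEq measurableSet_Ioo
  · rw [key]
    rw [setIntegral_congr_fun measurableSet_Ioo hEq.symm]
    exact integral_beta hs hps

/-- For `0 < s < 2ν` and `|a| < 1`:
`∫₀^∞ x^{s−1}/[(x+1)²+a²]^ν dx = B(s,2ν−s) ₂F₁(ν−s/2,ν+(1−s)/2;ν+1/2;−a²)`. -/
theorem mellin_transform_shifted_sq (s ν a : ℝ) (hs : 0 < s) (hsν : s < 2 * ν)
    (ha : |a| < 1) :
    ∫ x in Ioi (0:ℝ), x ^ (s - 1) / ((x + 1) ^ 2 + a ^ 2) ^ ν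
      = betaFn s (2 * ν - s) *
          hyp2F1 (ν - s / 2) (ν + (1 - s) / 2) (ν + 1 / 2) (-a ^ 2) := by
  have hν : 0 < ν := by linarith
  have ha2 : a ^ 2 < 1 := by
    have := abs_nonneg a
    nlinarith [sq_abs a]
  have ha2' : (0:ℝ) ≤ a ^ 2 := sq_nonneg a
  set c : ℕ → ℝ := fun n => (-1)^n * poch ν n / n.factorial * (a^2)^n with hc
  set F : ℕ → ℝ → ℝ :=
    fun n x => c n * (x ^ (s-1) * (1+x) ^ (-(2*ν + 2*(n:ℝ)))) with hF
  have habsc : ∀ n, |c n| = poch ν n / n.factorial * (a^2)^n := by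
    intro n
    have h1 : (0:ℝ) < poch ν n := poch_pos hν n
    have h2 : (0:ℝ) < (n.factorial : ℝ) := by positivity
    rw [hc, abs_mul, abs_div, abs_mul, abs_pow, abs_pow, abs_neg, abs_one, one_pow,
      one_mul, abs_of_pos h1, abs_of_pos h2, abs_of_nonneg ha2']
  -- pointwise expansion
  have hpt : ∀ x ∈ Ioi (0:ℝ),
      HasSum (fun n => F n x) (x ^ (s-1) / ((x+1)^2 + a^2) ^ ν) := by
    intro x hx
    rw [mem_Ioi] at hx
    set X : ℝ := x + 1 with hX
    have hX0 : (0:ℝ) < X := by rw [hX]; linarith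
    have hX1 : (1:ℝ) ≤ X := by rw [hX]; linarith
    have hX2 : (0:ℝ) < X^2 := by positivity
    set t : ℝ := a^2 / X^2 with ht
    have ht0 : 0 ≤ t := by positivity
    have ht1 : t < 1 := by
      rw [ht, div_lt_one hX2]
      nlinarith
    have htabs : |t| < 1 := by rwa [abs_of_nonneg ht0]
    have hbin := hasSum_binomial hν htabs
    have hKey : x ^ (s-1) / ((x+1)^2 + a^2) ^ ν
        = (x ^ (s-1) * (X^2) ^ (-ν)) * (1+t) ^ (-ν) := by
      have hdecomp : (x+1)^2 + a^2 = X^2 * (1+t) := by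
        rw [ht, hX]
        field_simp
      rw [hdecomp, Real.mul_rpow hX2.le (by linarith : (0:ℝ) ≤ 1+t),
        Real.rpow_neg hX2.le, Real.rpow_neg (by linarith : (0:ℝ) ≤ 1+t)]
      ring
    rw [hKey]
    have hsum := hbin.mul_left (x ^ (s-1) * (X^2) ^ (-ν))
    have hfun : (fun n : ℕ => F n x)
        = fun n : ℕ => (x ^ (s-1) * (X^2) ^ (-ν)) * ((-1)^n * poch ν n / n.factorial * t^n) := by
      funext n
      have h1x : (1:ℝ) + x = X := by rw [hX]; ring
      have hpow : X ^ (-(2*ν + 2*(n:ℝ))) = (X^2) ^ (-ν) * (((X^2)^n : ℝ))⁻¹ := by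
        have e1 : ((X^2 : ℝ)) ^ (-ν) = X ^ (2 * (-ν)) := by
          rw [← Real.rpow_natCast X 2, ← Real.rpow_mul hX0.le]
          norm_num
        have e2 : (((X^2)^n : ℝ))⁻¹ = X ^ (-(2*(n:ℝ))) := by
          rw [← pow_mul, ← Real.rpow_natCast X (2*n), ← Real.rpow_neg hX0.le]
          push_cast
          ring_nf
        rw [e1, e2, ← Real.rpow_add hX0]
        congr 1
        ring
      show c n * (x ^ (s-1) * (1+x) ^ (-(2*ν + 2*(n:ℝ)))) = _
      rw [h1x, hpow, hc, ht, div_pow]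
      have hXn : (((X^2)^n : ℝ)) ≠ 0 := by positivity
      field_simp
    rw [hfun]
    exact hsum
  -- integrability of each term
  have hInt : ∀ n : ℕ, IntegrableOn (F n) (Ioi 0) := by
    intro n
    have h0n : (0:ℝ) ≤ (n:ℝ) := Nat.cast_nonneg n
    have hp : s < 2*ν + 2*(n:ℝ) := by linarith
    exact ((mellin_beta hs hp).1).const_mul (c n)
  -- value of each term
  have hval : ∀ n : ℕ, ∫ x in Ioi (0:ℝ), F n x = c n * betaFn s (2*ν + 2*(n:ℝ) - s) := by
    intro n
    have h0n : (0:ℝ) ≤ (n:ℝ) := Nat.cast_nonneg n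
    have hp : s < 2*ν + 2*(n:ℝ) := by linarith
    simp only [hF]
    rw [MeasureTheory.integral_const_mul, (mellin_beta hs hp).2]
  have hy : 0 < 2*ν - s := by linarith
  -- Beta shift identity and bound
  have hbetaEq : ∀ n : ℕ, betaFn s (2*ν + 2*(n:ℝ) - s)
      = betaFn s (2*ν - s) * (poch (2*ν - s) (2*n) / poch (2*ν) (2*n)) := by
    intro n
    have h1 : 2*ν + 2*(n:ℝ) - s = (2*ν - s) + ((2*n : ℕ):ℝ) := by push_cast; ring
    rw [h1, betaFn_add_nat hs hy, show s + (2*ν - s) = 2*ν by ring]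
  have hbetaLe : ∀ n : ℕ, betaFn s (2*ν + 2*(n:ℝ) - s) ≤ betaFn s (2*ν - s) := by
    intro n
    rw [hbetaEq n]
    have h2 : poch (2*ν - s) (2*n) ≤ poch (2*ν) (2*n) := poch_le_poch hy (by linarith) _
    have h3 : 0 < poch (2*ν) (2*n) := poch_pos (by linarith) _
    have h4 : 0 < betaFn s (2*ν - s) := betaFn_pos hs hy
    have h5 : poch (2*ν - s) (2*n) / poch (2*ν) (2*n) ≤ 1 := by
      rw [div_le_one h3]; exact h2
    nlinarith [poch_pos hy (2*n), (div_pos (poch_pos hy (2*n)) h3)]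
  -- summability of the majorant
  have hM : Summable (fun n : ℕ => poch ν n / n.factorial * (a^2)^n) := by
    have habs' : |(-(a^2):ℝ)| < 1 := by rwa [abs_neg, abs_of_nonneg ha2']
    have h := (hasSum_binomial hν habs').summable
    apply h.congr
    intro n
    show (-1)^n * poch ν n / n.factorial * (-(a^2))^n = _
    have hnp : (-(a^2):ℝ)^n = (-1)^n * (a^2)^n := by rw [neg_pow]
    have he : ((-1:ℝ))^(n+n) = 1 := Even.neg_one_pow ⟨n, rfl⟩
    rw [hnp, show ((-1:ℝ))^n * poch ν n / ↑n.factorial * ((-1)^n * (a^2)^n)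
      = ((-1:ℝ))^(n+n) * (poch ν n / ↑n.factorial * (a^2)^n) by rw [pow_add]; ring, he, one_mul]
  -- measurability
  have hmeas : ∀ n : ℕ, AEStronglyMeasurable (F n) (volume.restrict (Ioi 0)) := by
    intro n
    apply Measurable.aestronglyMeasurable
    show Measurable (fun x : ℝ => c n * (x ^ (s-1) * (1+x) ^ (-(2*ν + 2*(n:ℝ)))))
    fun_prop
  -- lintegral of each norm
  have hlint : ∀ n : ℕ, (∫⁻ x in Ioi (0:ℝ), ‖F n x‖₊)
      = ENNReal.ofReal (|c n| * betaFn s (2*ν + 2*(n:ℝ) - s)) := by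
    intro n
    have h0n : (0:ℝ) ≤ (n:ℝ) := Nat.cast_nonneg n
    have hp : s < 2*ν + 2*(n:ℝ) := by linarith
    have hIg : IntegrableOn
        (fun x : ℝ => |c n| * (x ^ (s-1) * (1+x) ^ (-(2*ν + 2*(n:ℝ))))) (Ioi 0) :=
      ((mellin_beta hs hp).1).const_mul _
    have hnn : 0 ≤ᵐ[volume.restrict (Ioi 0)]
        (fun x : ℝ => |c n| * (x ^ (s-1) * (1+x) ^ (-(2*ν + 2*(n:ℝ))))) := by
      filter_upwards [ae_restrict_mem measurableSet_Ioi] with x hx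
      have hx0 : (0:ℝ) < x := hx
      positivity
    have h1 := MeasureTheory.ofReal_integral_eq_lintegral_ofReal hIg hnn
    rw [MeasureTheory.integral_const_mul, (mellin_beta hs hp).2] at h1
    have h2 : (∫⁻ x in Ioi (0:ℝ), ‖F n x‖₊)
        = ∫⁻ x in Ioi (0:ℝ),
            ENNReal.ofReal (|c n| * (x ^ (s-1) * (1+x) ^ (-(2*ν + 2*(n:ℝ))))) := by
      apply lintegral_congr_ae
      filter_upwards [ae_restrict_mem measurableSet_Ioi] with x hx
      have hx0 : (0:ℝ) < x := hx
      rw [← enorm_eq_nnnorm, ← ofReal_norm]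
      congr 1
      show ‖c n * (x ^ (s-1) * (1+x) ^ (-(2*ν + 2*(n:ℝ))))‖ = _
      rw [Real.norm_eq_abs, abs_mul]
      congr 1
      exact abs_of_nonneg (by positivity)
    rw [h2, ← h1]
  -- the sum of the lintegrals is finite
  have hne : (∑' n : ℕ, ∫⁻ x in Ioi (0:ℝ), ‖F n x‖₊) ≠ ⊤ := by
    have hb : ∀ n : ℕ, (∫⁻ x in Ioi (0:ℝ), ‖F n x‖₊)
        ≤ ENNReal.ofReal (poch ν n / n.factorial * (a^2)^n * betaFn s (2*ν - s)) := by
      intro n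
      rw [hlint n, habsc n]
      apply ENNReal.ofReal_le_ofReal
      have h6 := hbetaLe n
      have hpos : 0 ≤ poch ν n / n.factorial * (a^2)^n := by
        have := (poch_pos hν n).le
        positivity
      exact mul_le_mul_of_nonneg_left h6 hpos
    have hnn : ∀ n : ℕ, 0 ≤ poch ν n / n.factorial * (a^2)^n * betaFn s (2*ν - s) := by
      intro n
      have := (poch_pos hν n).le
      have := (betaFn_pos hs hy).le
      positivity
    have hle : (∑' n : ℕ, ∫⁻ x in Ioi (0:ℝ), ‖F n x‖₊)
        ≤ ENNReal.ofReal (∑' n : ℕ, poch ν n / n.factorial * (a^2)^n * betaFn s (2*ν - s)) := by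
      refine le_trans (ENNReal.tsum_le_tsum hb) (le_of_eq ?_)
      exact (ENNReal.ofReal_tsum_of_nonneg hnn (hM.mul_right _)).symm
    exact ne_top_of_le_ne_top ENNReal.ofReal_ne_top hle
  -- interchange sum and integral
  have hint : ∫ x in Ioi (0:ℝ), x ^ (s-1) / ((x+1)^2 + a^2) ^ ν
      = ∑' n : ℕ, ∫ x in Ioi (0:ℝ), F n x := by
    rw [← MeasureTheory.integral_tsum hmeas hne]
    apply setIntegral_congr_fun measurableSet_Ioi
    intro x hx
    exact ((hpt x hx).tsum_eq).symm
  rw [hint, tsum_congr hval]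
  -- final algebraic identification with the hypergeometric series
  rw [hyp2F1, ← tsum_mul_left]
  apply tsum_congr
  intro n
  rw [hbetaEq n]
  have e1 : poch (2*ν - s) (2*n) = 4^n * poch (ν - s/2) n * poch (ν + (1-s)/2) n := by
    rw [poch_two_mul, show (2*ν - s)/2 = ν - s/2 by ring,
      show ((2*ν - s) + 1)/2 = ν + (1-s)/2 by ring]
  have e2 : poch (2*ν) (2*n) = 4^n * poch ν n * poch (ν + 1/2) n := by
    rw [poch_two_mul, show (2*ν)/2 = ν by ring, show ((2*ν) + 1)/2 = ν + 1/2 by ring]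
  rw [e1, e2, hc]
  have hne1 : poch ν n ≠ 0 := (poch_pos hν n).ne'
  have hne2 : poch (ν + 1/2) n ≠ 0 := (poch_pos (by linarith) n).ne'
  have hne3 : ((n.factorial : ℝ)) ≠ 0 := by positivity
  have hne4 : ((4:ℝ))^n ≠ 0 := by positivity
  have hnp : (-a^2 : ℝ)^n = (-1)^n * (a^2)^n := by rw [neg_pow]
  rw [hnp]
  have hcl1 : ((1:ℝ)/4)^n * 4^n = 1 := by
    rw [← mul_pow]
    norm_num
  have hcl2 : poch ν n * (poch ν n)⁻¹ = 1 := mul_inv_cancel₀ hne1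
  field_simp [hne1, hne2, hne3, hne4]
end

section
/- Let a > 0, b > 0, s ∈ ℝ, and let α, β be real numbers with α > 0 and β > 0. Then ∫₀¹ x^{α−1} (1−x)^{β−1} (a x + b(1−x))^{−(α+β)} · exp(s x / (a x + b(1−x))) dx = B(α,β) · a^{−α} · b^{−β} · ₁F₁(α; α+β; s/a). -/
open MeasureTheory Set

/-- The confluent hypergeometric series `₁F₁(a;b;z)`. -/
noncomputable def hyp1F1 (a b z : ℝ) : ℝ :=
  ∑' n : ℕ, poch a n / poch b n * z ^ n / n.factorial

lemma Gamma_add_nat {x : ℝ} (hx : 0 < x) (n : ℕ) :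
    Real.Gamma (x + n) = poch x n * Real.Gamma x := by
  induction n with
  | zero => simp [poch]
  | succ n ih =>
    have hxn : (0:ℝ) < x + n := by positivity
    have : x + (n+1 : ℕ) = (x + n) + 1 := by push_cast; ring
    rw [this, Real.Gamma_add_one hxn.ne', ih]
    simp only [poch, Finset.prod_range_succ]
    ring

lemma betaFn_add_nat_s15 {α β : ℝ} (hα : 0 < α) (hβ : 0 < β) (n : ℕ) :
    betaFn (α + n) β = betaFn α β * (poch α n / poch (α + β) n) := by
  have h1 : Real.Gamma (α + n) = poch α n * Real.Gamma α := Gamma_add_nat hα n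
  have h2 : Real.Gamma ((α + β) + n) = poch (α + β) n * Real.Gamma (α + β) :=
    Gamma_add_nat (by positivity) n
  have hpoch : 0 < poch (α + β) n := Finset.prod_pos (fun i _ => by positivity)
  have hG : 0 < Real.Gamma (α + β) := Real.Gamma_pos_of_pos (by positivity)
  rw [betaFn, betaFn, h1, show α + n + β = (α + β) + n by ring, h2]
  field_simp

lemma beta_norm_eq (p q : ℝ) {x : ℝ} (hx : x ∈ Ioo (0:ℝ) 1) :
    ‖(x:ℂ) ^ ((p:ℂ)-1) * (1-(x:ℂ)) ^ ((q:ℂ)-1)‖ = x ^ (p-1) * (1-x) ^ (q-1) := by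
  obtain ⟨h0, h1⟩ := hx
  have h1' : (0:ℝ) < 1 - x := by linarith
  rw [norm_mul,
    show (1 - (x:ℂ)) = (((1-x:ℝ)):ℂ) by push_cast; ring,
    Complex.norm_cpow_eq_rpow_re_of_pos h0, Complex.norm_cpow_eq_rpow_re_of_pos h1']
  norm_num

lemma betaIntegrable {p q : ℝ} (hp : 0 < p) (hq : 0 < q) :
    IntegrableOn (fun x : ℝ => x ^ (p-1) * (1-x) ^ (q-1)) (Ioo (0:ℝ) 1) := by
  have hc := Complex.betaIntegral_convergent (u := p) (v := q) (by simpa) (by simpa)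
  have hi : IntegrableOn (fun x : ℝ => (x:ℂ) ^ ((p:ℂ)-1) * (1-(x:ℂ)) ^ ((q:ℂ)-1))
      (Ioc (0:ℝ) 1) := by
    simpa [intervalIntegrable_iff_integrableOn_Ioc_of_le] using hc
  refine IntegrableOn.congr_fun ((hi.mono_set Ioo_subset_Ioc_self).norm) ?_ measurableSet_Ioo
  intro x hx
  exact beta_norm_eq p q hx

lemma betaIntegral_real {p q : ℝ} (hp : 0 < p) (hq : 0 < q) :
    ∫ x in Ioo (0:ℝ) 1, x ^ (p-1) * (1-x) ^ (q-1) = betaFn p q := by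
  have hGpq : (0:ℝ) < Real.Gamma (p + q) := Real.Gamma_pos_of_pos (by positivity)
  have hmain := Complex.Gamma_mul_Gamma_eq_betaIntegral (s := (p:ℂ)) (t := (q:ℂ))
    (by simpa) (by simpa)
  have hval : Complex.betaIntegral p q = ((betaFn p q : ℝ) : ℂ) := by
    have h2 : ((p:ℂ) + q) = ((p + q : ℝ) : ℂ) := by push_cast; ring
    rw [h2] at hmain
    rw [Complex.Gamma_ofReal, Complex.Gamma_ofReal, Complex.Gamma_ofReal] at hmain
    rw [betaFn]
    push_cast
    rw [eq_div_iff (by exact_mod_cast hGpq.ne')]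
    linear_combination -hmain
  have hint : Complex.betaIntegral p q
      = ∫ x in Ioo (0:ℝ) 1, (((x:ℝ) ^ (p-1) * (1-x) ^ (q-1) : ℝ) : ℂ) := by
    rw [Complex.betaIntegral, intervalIntegral.integral_of_le zero_le_one,
      integral_Ioc_eq_integral_Ioo]
    refine setIntegral_congr_fun measurableSet_Ioo (fun x hx => ?_)
    obtain ⟨h0, h1⟩ := hx
    have h1' : (0:ℝ) < 1 - x := by linarith
    rw [Complex.ofReal_mul, Complex.ofReal_cpow h0.le, Complex.ofReal_cpow h1'.le]
    push_cast
    ring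
  rw [hint] at hval
  apply Complex.ofReal_injective
  exact (_root_.integral_ofReal (𝕜 := ℂ)).symm.trans hval


lemma exp_tsum (y : ℝ) : Real.exp y = ∑' n : ℕ, y ^ n / n.factorial := by
  rw [Real.exp_eq_exp_ℝ, NormedSpace.exp_eq_tsum_div]

lemma euler_integral {α β : ℝ} (hα : 0 < α) (hβ : 0 < β) (z : ℝ) :
    ∫ x in Ioo (0:ℝ) 1, x ^ (α-1) * (1-x) ^ (β-1) * Real.exp (z * x)
      = betaFn α β * hyp1F1 α (α + β) z := by
  set f : ℕ → ℝ → ℝ := fun n x => (z ^ n / n.factorial) * (x ^ (α + n - 1) * (1-x) ^ (β-1))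
    with hf
  have hαn : ∀ n : ℕ, (0:ℝ) < α + n := fun n => by positivity
  have hInt : ∀ n, IntegrableOn (f n) (Ioo (0:ℝ) 1) volume := fun n =>
    (betaIntegrable (hαn n) hβ).const_mul _
  have hval : ∀ n, ∫ x in Ioo (0:ℝ) 1, f n x
      = betaFn α β * (poch α n / poch (α+β) n * z ^ n / n.factorial) := by
    intro n
    rw [hf]
    simp only
    rw [integral_const_mul, betaIntegral_real (hαn n) hβ,
      betaFn_add_nat_s15 hα hβ n]
    ring
  have hbound : ∀ n, (∫ x in Ioo (0:ℝ) 1, ‖f n x‖)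
      ≤ betaFn α β * (|z| ^ n / n.factorial) := by
    intro n
    have h1 : ∀ x ∈ Ioo (0:ℝ) 1, ‖f n x‖ ≤ (|z| ^ n / n.factorial) *
        (x ^ (α-1) * (1-x) ^ (β-1)) := by
      intro x hx
      obtain ⟨h0, h1⟩ := hx
      have h1' : (0:ℝ) < 1 - x := by linarith
      rw [hf]
      simp only [norm_mul, norm_div, Real.norm_eq_abs]
      rw [abs_of_nonneg (Real.rpow_nonneg h0.le _), abs_of_nonneg (Real.rpow_nonneg h1'.le _),
        abs_pow, abs_of_nonneg (by positivity : (0:ℝ) ≤ (n.factorial:ℝ))]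
      have hle : x ^ (α + n - 1) ≤ x ^ (α - 1) :=
        Real.rpow_le_rpow_of_exponent_ge h0 h1.le (by push_cast; linarith [Nat.cast_nonneg (α := ℝ) n])
      have : (0:ℝ) ≤ |z| ^ n / n.factorial := by positivity
      calc |z| ^ n / (n.factorial:ℝ) * (x ^ (α + n - 1) * (1-x) ^ (β-1))
          ≤ |z| ^ n / (n.factorial:ℝ) * (x ^ (α - 1) * (1-x) ^ (β-1)) := by
            apply mul_le_mul_of_nonneg_left _ this
            exact mul_le_mul_of_nonneg_right hle (Real.rpow_nonneg h1'.le _)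
        _ = _ := rfl
    calc (∫ x in Ioo (0:ℝ) 1, ‖f n x‖)
        ≤ ∫ x in Ioo (0:ℝ) 1, (|z| ^ n / n.factorial) * (x ^ (α-1) * (1-x) ^ (β-1)) := by
          apply setIntegral_mono_on (hInt n).norm ((betaIntegrable hα hβ).const_mul _)
            measurableSet_Ioo h1
      _ = (|z| ^ n / n.factorial) * betaFn α β := by
          rw [integral_const_mul, betaIntegral_real hα hβ]
      _ = betaFn α β * (|z| ^ n / n.factorial) := by ring
  have hsum : Summable fun n => ∫ x in Ioo (0:ℝ) 1, ‖f n x‖ := by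
    apply Summable.of_nonneg_of_le
      (fun n => integral_nonneg (fun x => norm_nonneg _)) hbound
    exact ((Real.summable_pow_div_factorial |z|).mul_left _)
  have hswap := MeasureTheory.integral_tsum_of_summable_integral_norm hInt hsum
  have hpt : ∀ x ∈ Ioo (0:ℝ) 1,
      (∑' n, f n x) = x ^ (α-1) * (1-x) ^ (β-1) * Real.exp (z * x) := by
    intro x hx
    obtain ⟨h0, h1⟩ := hx
    have key : ∀ n : ℕ, f n x = (x ^ (α-1) * (1-x) ^ (β-1)) * ((z*x) ^ n / n.factorial) := by
      intro n
      rw [hf]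
      simp only
      rw [show α + n - 1 = (α - 1) + n by ring, Real.rpow_add h0,
        Real.rpow_natCast, mul_pow]
      ring
    rw [tsum_congr key, tsum_mul_left, exp_tsum (z*x)]
  rw [← setIntegral_congr_fun measurableSet_Ioo hpt, ← hswap, tsum_congr hval,
    tsum_mul_left, hyp1F1]


/-- For `a,b > 0`, `s ∈ ℝ`, `α,β > 0`:
`∫₀¹ x^{α−1}(1−x)^{β−1}(ax+b(1−x))^{−(α+β)} e^{sx/(ax+b(1−x))} dx
  = B(α,β) a^{−α} b^{−β} ₁F₁(α;α+β;s/a)`. -/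
theorem feynman_exp_integral (a b s α β : ℝ) (ha : 0 < a) (hb : 0 < b)
    (hα : 0 < α) (hβ : 0 < β) :
    ∫ x in Ioo (0:ℝ) 1,
        x ^ (α - 1) * (1 - x) ^ (β - 1) * (a * x + b * (1 - x)) ^ (-(α + β)) *
          Real.exp (s * x / (a * x + b * (1 - x)))
      = betaFn α β * a ^ (-α) * b ^ (-β) * hyp1F1 α (α + β) (s / a) := by
  set φ : ℝ → ℝ → ℝ → ℝ := fun p q u => q * u / (q * u + p * (1 - u)) with hφ
  have hD : ∀ p q : ℝ, 0 < p → 0 < q → ∀ u ∈ Ioo (0:ℝ) 1, 0 < q * u + p * (1 - u) := by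
    intro p q hp hq u ⟨h0, h1⟩
    have : (0:ℝ) < 1 - u := by linarith
    positivity
  have hmem : ∀ p q : ℝ, 0 < p → 0 < q → ∀ u ∈ Ioo (0:ℝ) 1, φ p q u ∈ Ioo (0:ℝ) 1 := by
    intro p q hp hq u hu
    obtain ⟨h0, h1⟩ := hu
    have h1' : (0:ℝ) < 1 - u := by linarith
    have hDu := hD p q hp hq u ⟨h0, h1⟩
    constructor
    · rw [hφ]; positivity
    · rw [hφ]
      simp only
      rw [div_lt_one hDu]
      nlinarith
  have hinv : ∀ p q : ℝ, 0 < p → 0 < q → ∀ u ∈ Ioo (0:ℝ) 1, φ q p (φ p q u) = u := by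
    intro p q hp hq u hu
    have hDu := hD p q hp hq u hu
    rw [hφ]
    simp only
    have h2 : p * (q*u/(q*u+p*(1-u))) + q * (1 - q*u/(q*u+p*(1-u)))
        = p*q/(q*u+p*(1-u)) := by
      field_simp
      ring
    rw [h2]
    field_simp
  have himg : φ a b '' Ioo (0:ℝ) 1 = Ioo (0:ℝ) 1 := by
    apply Subset.antisymm
    · rintro x ⟨u, hu, rfl⟩
      exact hmem a b ha hb u hu
    · intro x hx
      exact ⟨φ b a x, hmem b a hb ha x hx, hinv b a hb ha x hx⟩
  have hinj : InjOn (φ a b) (Ioo (0:ℝ) 1) := by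
    intro u hu v hv h
    have := hinv a b ha hb u hu
    rw [h, hinv a b ha hb v hv] at this
    exact this.symm
  have hderiv : ∀ u ∈ Ioo (0:ℝ) 1,
      HasDerivWithinAt (φ a b) (a * b / (b * u + a * (1 - u)) ^ 2) (Ioo (0:ℝ) 1) u := by
    intro u hu
    have hDu := hD a b ha hb u hu
    have h1 : HasDerivAt (fun u : ℝ => b * u) b u := by
      simpa using (hasDerivAt_id u).const_mul b
    have h2 : HasDerivAt (fun u : ℝ => b * u + a * (1 - u)) (b - a) u := by
      have : HasDerivAt (fun u : ℝ => a * (1 - u)) (-a) u := by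
        have := ((hasDerivAt_id u).const_mul (-1:ℝ)).const_add 1
        simpa [sub_eq_add_neg] using this.const_mul a
      exact (h1.add this).congr_deriv (by ring)
    have := h1.div h2 hDu.ne'
    have heq : (b * (b * u + a * (1 - u)) - b * u * (b - a)) / (b * u + a * (1 - u)) ^ 2
        = a * b / (b * u + a * (1 - u)) ^ 2 := by
      congr 1
      ring
    rw [heq] at this
    exact this.hasDerivWithinAt
  have hCoV := integral_image_eq_integral_abs_deriv_smul measurableSet_Ioo hderiv hinj
    (fun x => x ^ (α - 1) * (1 - x) ^ (β - 1) * (a * x + b * (1 - x)) ^ (-(α + β)) *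
          Real.exp (s * x / (a * x + b * (1 - x))))
  rw [himg] at hCoV
  rw [hCoV]
  have hpt : ∀ u ∈ Ioo (0:ℝ) 1,
      |a * b / (b * u + a * (1 - u)) ^ 2| •
        ((φ a b u) ^ (α - 1) * (1 - φ a b u) ^ (β - 1) *
          (a * φ a b u + b * (1 - φ a b u)) ^ (-(α + β)) *
          Real.exp (s * φ a b u / (a * φ a b u + b * (1 - φ a b u))))
      = (a ^ (-α) * b ^ (-β)) *
        (u ^ (α - 1) * (1 - u) ^ (β - 1) * Real.exp ((s / a) * u)) := by
    intro u hu
    obtain ⟨h0, h1⟩ := hu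
    have h1' : (0:ℝ) < 1 - u := by linarith
    have hDu : (0:ℝ) < b * u + a * (1 - u) := hD a b ha hb u ⟨h0, h1⟩
    set D := b * u + a * (1 - u) with hDdef
    have hx1 : φ a b u = b * u / D := rfl
    have h1x : 1 - φ a b u = a * (1 - u) / D := by
      rw [hx1]; field_simp; rw [hDdef]; ring
    have hax : a * φ a b u + b * (1 - φ a b u) = a * b / D := by
      rw [hx1, h1x]; field_simp; ring
    have harg : s * φ a b u / (a * φ a b u + b * (1 - φ a b u)) = s / a * u := by
      rw [hx1, hax]; field_simp
    rw [harg, hax, hx1, h1x, smul_eq_mul,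
      abs_of_pos (by positivity : (0:ℝ) < a * b / D ^ 2)]
    rw [Real.rpow_def_of_pos (by positivity : (0:ℝ) < b * u / D),
      Real.rpow_def_of_pos (by positivity : (0:ℝ) < a * (1-u) / D),
      Real.rpow_def_of_pos (by positivity : (0:ℝ) < a * b / D),
      Real.rpow_def_of_pos ha, Real.rpow_def_of_pos hb,
      Real.rpow_def_of_pos h0, Real.rpow_def_of_pos h1',
      ← Real.exp_log (by positivity : (0:ℝ) < a * b / D ^ 2)]
    simp only [← Real.exp_add]
    rw [Real.exp_eq_exp]
    rw [Real.log_div (by positivity) (by positivity),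
      Real.log_div (by positivity) (by positivity),
      Real.log_div (by positivity) (by positivity),
      Real.log_div (by positivity) (by positivity),
      Real.log_mul (by positivity) (by positivity),
      Real.log_mul (by positivity) (by positivity),
      Real.log_mul (by positivity) (by positivity),
      Real.log_pow]
    push_cast
    ring
  rw [setIntegral_congr_fun measurableSet_Ioo hpt, integral_const_mul,
    euler_integral hα hβ (s / a)]
  ring
end
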